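/- Let p, p' : V → Option V be two parent functions on a finite set V such that for every v, p'(v) = p(v) or p'(v) = none (each node either keeps its parent or becomes a root). If every vertex is valid under p, then every vertex is valid under p'. -/

import Mathlib

variable {V : Type*}

/-- Iterating a parent function `p : V → Option V`: `piter p n v` is the `n`-th parent
of `v` (or `none` if the chain has ended). -/
def piter (p : V → Option V) (n : ℕ) (v : V) : Option V := (fun o => o.bind p)^[n] (some v)

/-- A vertex is valid if some finite iteration of the parent function from it reaches a
vertex with no parent (a root). -/
def pvalid (p : V → Option V) (v : V) : Prop := ∃ n u, piter p n v = some u ∧ p u = none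

/-- Weak connectivity relation of the functional digraph with edges `v → p v`. -/
def pconn (p : V → Option V) : V → V → Prop :=
  Relation.ReflTransGen (fun a b => p a = some b ∨ p b = some a)

theorem pconn_equiv (p : V → Option V) : Equivalence (pconn p) :=
  ⟨fun _ => .refl,
   fun h => (@Relation.ReflTransGen.stdSymm _ _ ⟨fun _ _ hab => Or.symm hab⟩).symm _ _ h,
   fun h₁ h₂ => h₁.trans h₂⟩

/-- The setoid whose classes are the weakly connected components of the functional
digraph of `p`. -/
def pSetoid (p : V → Option V) : Setoid V := ⟨pconn p, pconn_equiv p⟩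

lemma iter_none (p : V → Option V) (n : ℕ) :
    (fun o => o.bind p)^[n] (none : Option V) = none := by
  induction n with
  | zero => rfl
  | succ n ih => rw [Function.iterate_succ_apply]; simpa using ih

lemma piter_succ (p : V → Option V) (n : ℕ) (v w : V) (h : p v = some w) :
    piter p (n+1) v = piter p n w := by
  simp [piter, Function.iterate_succ_apply, h]

lemma pvalid_of_piter : ∀ (n : ℕ) (p p' : V → Option V),
    (∀ v, p' v = p v ∨ p' v = none) →
    ∀ v u, piter p n v = some u → p u = none → pvalid p' v := by
  intro n
  induction n with
  | zero =>
    intro p p' hstep v u h hu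
    simp [piter] at h
    subst h
    rcases hstep v with h' | h'
    · exact ⟨0, v, by simp [piter], h'.trans hu⟩
    · exact ⟨0, v, by simp [piter], h'⟩
  | succ n ih =>
    intro p p' hstep v u h hu
    rcases hw : p v with _ | w
    · rw [piter, Function.iterate_succ_apply] at h
      simp only [Option.bind_some, hw] at h
      rw [iter_none] at h
      exact absurd h (by simp)
    · rw [piter_succ p n v w hw] at h
      rcases hstep v with h' | h'
      · obtain ⟨m, x, hm, hx⟩ := ih p p' hstep w u h hu
        exact ⟨m+1, x, by rw [piter_succ p' m v w (h'.trans hw)]; exact hm, hx⟩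
      · exact ⟨0, v, by simp [piter], h'⟩

/-- If each node either keeps its parent or becomes a root, validity of all vertices is
preserved. -/
theorem keep_or_orphan_preserves_valid [Fintype V] (p p' : V → Option V)
    (hstep : ∀ v, p' v = p v ∨ p' v = none)
    (hvalid : ∀ v, pvalid p v) :
    ∀ v, pvalid p' v := by
  intro v
  obtain ⟨n, u, h, hu⟩ := hvalid v
  exact pvalid_of_piter n p p' hstep v u h hu
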